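/- arXiv:1904.06283 — 2 statements merged into one kernel-verified Lean document; each statement's English description precedes it below -/
import Mathlib

section
/- If two permutations π, π' ∈ S_n have the same skeleton, then |s⁻¹(π)| = |s⁻¹(π')|; equivalently, the fertility statistic fer(π) = |s⁻¹(π)| is a skeletal statistic. -/
/-- `l` is a permutation of `{1, …, n}`, written as a word. -/
def IsPermList (n : ℕ) (l : List ℕ) : Prop := l.Perm (List.range' 1 n)

/-- The word obtained from `l` by exchanging the positions of the entries `i` and `i+1`. -/
def swapEntries (i : ℕ) (l : List ℕ) : List ℕ :=
  l.map fun x => if x = i then i + 1 else if x = i + 1 then i else x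

/-- Some entry larger than `i+1` appears (strictly) between the entries `i` and `i+1`
in the word `l`. -/
def ToggleApplies (i : ℕ) (l : List ℕ) : Prop :=
  ∃ a ∈ l, i + 1 < a ∧
    min (l.idxOf i) (l.idxOf (i + 1)) < l.idxOf a ∧
    l.idxOf a < max (l.idxOf i) (l.idxOf (i + 1))

open scoped Classical in
/-- The polyurethane toggle `p i`. -/
noncomputable def toggle (i : ℕ) (l : List ℕ) : List ℕ :=
  if ToggleApplies i l then swapEntries i l else l

lemma max_getD_mem (l : List ℕ) (h : l ≠ []) : l.max?.getD 0 ∈ l := by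
  rcases hm : l.max? with _ | m'
  · exact absurd (List.max?_eq_none_iff.mp hm) h
  · simpa using List.max?_mem hm

lemma length_takeWhile_lt (p : ℕ → Bool) (l : List ℕ) (x : ℕ) (hx : x ∈ l) (hpx : p x = false) :
    (l.takeWhile p).length < l.length := by
  rcases Nat.lt_or_ge (l.takeWhile p).length l.length with h | h
  · exact h
  · have := List.takeWhile_eq_self_iff.mp ((List.takeWhile_sublist p).eq_of_length_le h) x hx
    rw [hpx] at this; exact absurd this (by simp)

lemma length_dropWhile_tail_lt (p : ℕ → Bool) (l : List ℕ) (h : l ≠ []) :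
    ((l.dropWhile p).tail).length < l.length := by
  have h1 : (l.dropWhile p).length ≤ l.length := (List.dropWhile_sublist _).length_le
  have h2 : ((l.dropWhile p).tail).length ≤ (l.dropWhile p).length - 1 := by
    simp [List.length_tail]
  have : 0 < l.length := List.length_pos_iff.mpr h
  omega

/-- West's stack-sorting map `s`: `s([]) = []` and `s(LmR) = s(L) s(R) m`,
where `m` is the largest entry. -/
def stackSort : List ℕ → List ℕ
  | [] => []
  | a :: rest =>
    stackSort ((a :: rest).takeWhile (· ≠ (a :: rest).max?.getD 0)) ++
      stackSort (((a :: rest).dropWhile (· ≠ (a :: rest).max?.getD 0)).tail) ++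
      [(a :: rest).max?.getD 0]
termination_by l => l.length
decreasing_by
  · exact length_takeWhile_lt _ _ _ (max_getD_mem (a :: rest) (by simp)) (by simp)
  · exact length_dropWhile_tail_lt _ _ (by simp)

/-- The inverse of the permutation `l` of `{1, …, n}`, as a word: its `k`-th entry is the
position (1-indexed) of the entry `k` in `l`. -/
def invw (l : List ℕ) : List ℕ := (List.range' 1 l.length).map fun k => l.idxOf k + 1

/-- The composition `l · m` of permutations written as words: `(l · m) j = l (m j)`. -/
def compw (l m : List ℕ) : List ℕ := m.map fun k => l.getD (k - 1) 0

/-- The group element `π⁻¹ · s(π)`, which encodes the skeleton of `π`: two permutations of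
`{1, …, n}` have the same skeleton if and only if their `skel`s coincide. -/
def skel (l : List ℕ) : List ℕ := compw (invw l) (stackSort l)


/-! ### Auxiliary machinery -/

/-- Structure of a nonempty list split at its maximum. -/
lemma maxSplit (l : List ℕ) (hne : l ≠ []) :
    ∃ t d m, m = l.max?.getD 0 ∧ t = l.takeWhile (· ≠ m) ∧ d = (l.dropWhile (· ≠ m)).tail ∧
      l = t ++ m :: d ∧ m ∉ t ∧ (∀ x ∈ l, x ≤ m) := by
  rcases hm : l.max? with _ | m'
  · exact absurd (List.max?_eq_none_iff.mp hm) hne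
  have hmem : m' ∈ l := List.max?_mem hm
  have hle : ∀ b ∈ l, b ≤ m' :=
    List.max?_eq_some_iff.mp hm |>.2
  simp only [Option.getD_some]
  refine ⟨_, _, m', rfl, rfl, rfl, ?_, ?_, hle⟩
  · have hdne : l.dropWhile (· ≠ m') ≠ [] := by
      intro h
      have := List.dropWhile_eq_nil_iff.mp h m' hmem
      simp at this
    have hhead : (l.dropWhile (· ≠ m')).head hdne = m' := by
      have := List.head_dropWhile_not (· ≠ m') hdne
      simpa using this
    conv_lhs => rw [← List.takeWhile_append_dropWhile (p := (· ≠ m')) (l := l)]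
    congr 1
    have h2 := List.cons_head_tail hdne
    rw [hhead] at h2
    exact h2.symm
  · intro ht
    have := List.mem_takeWhile_imp ht
    simp at this

/-- One-step unfolding of `stackSort`. -/
lemma stackSort_ne_nil (l : List ℕ) (hne : l ≠ []) :
    stackSort l = stackSort (l.takeWhile (· ≠ l.max?.getD 0)) ++
      stackSort ((l.dropWhile (· ≠ l.max?.getD 0)).tail) ++ [l.max?.getD 0] := by
  rcases l with _ | ⟨a, rest⟩
  · exact absurd rfl hne
  · rw [stackSort]

/-- `stackSort` permutes its input. -/
lemma stackSort_perm (l : List ℕ) : (stackSort l).Perm l := by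
  suffices H : ∀ n (l : List ℕ), l.length = n → (stackSort l).Perm l from H _ l rfl
  intro n
  induction n using Nat.strong_induction_on with
  | _ n ih =>
    intro l hn
    rcases eq_or_ne l [] with rfl | hne
    · simp [stackSort]
    obtain ⟨t, d, m, hm, ht, hd, hsplit, hmt, hle⟩ := maxSplit l hne
    have hlt : t.length < n := by
      subst ht hm hn
      exact length_takeWhile_lt _ _ _ (max_getD_mem l hne) (by simp)
    have hld : d.length < n := by
      subst hd hm hn
      exact length_dropWhile_tail_lt _ _ hne
    rw [stackSort_ne_nil l hne, ← hm, ← ht, ← hd]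
    refine List.Perm.trans
      (((ih _ hlt t rfl).append (ih _ hld d rfl)).append (List.Perm.refl [m])) ?_
    rw [hsplit, List.append_assoc]
    exact List.Perm.append_left t (List.perm_append_singleton m d)


lemma getD_mem' (l : List ℕ) (i : ℕ) (hi : i < l.length) : l.getD i 0 ∈ l := by
  rw [List.getD_eq_getElem l 0 hi]; exact List.getElem_mem hi

/-- Key lemma: for a nodup list, the entry at `b` dominates all entries in `[a, b)`
iff all those entries are output before it by `stackSort`. -/
lemma domEnd_iff_ord :
    ∀ n (l : List ℕ), l.length = n → l.Nodup → ∀ a b : ℕ, a ≤ b → b < l.length →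
    ((∀ i, a ≤ i → i < b → l.getD i 0 < l.getD b 0) ↔
     (∀ i, a ≤ i → i < b →
       (stackSort l).idxOf (l.getD i 0) < (stackSort l).idxOf (l.getD b 0))) := by
  intro n
  induction n using Nat.strong_induction_on with
  | _ n ih =>
  intro l hn hl a b hab hb
  have hne : l ≠ [] := by
    intro h; subst h; simp at hb
  obtain ⟨t, d, m, hm, ht, hd, hsplit, hmt, hle⟩ := maxSplit l hne
  have hlt : t.length < n := by
    subst ht hm hn
    exact length_takeWhile_lt _ _ _ (max_getD_mem l hne) (by simp)
  have hld : d.length < n := by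
    subst hd hm hn
    exact length_dropWhile_tail_lt _ _ hne
  set j := t.length with hj
  have hsl : stackSort l = (stackSort t ++ stackSort d) ++ [m] := by
    rw [stackSort_ne_nil l hne, ← hm, ← ht, ← hd]
  have hpt := stackSort_perm t
  have hpd := stackSort_perm d
  have hl' := hl
  rw [hsplit, List.nodup_append] at hl'
  obtain ⟨hnt, hnmd, hdisj⟩ := hl'
  rw [List.nodup_cons] at hnmd
  obtain ⟨hmd, hnd⟩ := hnmd
  have hlen : l.length = j + d.length + 1 := by
    rw [hsplit]; simp [hj]; omega
  -- entries
  have e1 : ∀ i, i < j → l.getD i 0 = t.getD i 0 := fun i hi => by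
    rw [hsplit]; exact List.getD_append _ _ _ _ hi
  have e2 : l.getD j 0 = m := by
    rw [hsplit, List.getD_append_right _ _ _ _ (le_refl j)]
    simp [hj]
  have e3 : ∀ i, j < i → l.getD i 0 = d.getD (i - j - 1) 0 := fun i hi => by
    rw [hsplit, List.getD_append_right _ _ _ _ (le_of_lt hi)]
    obtain ⟨k, rfl⟩ := Nat.exists_eq_add_of_lt hi
    have h1 : j + k + 1 - j = k + 1 := by omega
    rw [h1]
    simp
  have mem't : ∀ i, i < j → t.getD i 0 ∈ t := fun i hi => getD_mem' t i hi
  have mem'd : ∀ k, k < d.length → d.getD k 0 ∈ d := fun k hk => getD_mem' d k hk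
  -- idxOf facts
  have idx_t : ∀ v ∈ t, (stackSort l).idxOf v = (stackSort t).idxOf v := fun v hv => by
    rw [hsl, List.idxOf_append_of_mem (List.mem_append_left _ (hpt.mem_iff.2 hv)),
      List.idxOf_append_of_mem (hpt.mem_iff.2 hv)]
  have idx_t_lt : ∀ v ∈ t, (stackSort l).idxOf v < j := fun v hv => by
    rw [idx_t v hv]
    have := List.idxOf_lt_length_iff.2 (hpt.mem_iff.2 hv)
    rwa [hpt.length_eq] at this
  have idx_d : ∀ v ∈ d, (stackSort l).idxOf v = j + (stackSort d).idxOf v := fun v hv => by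
    have hvt : v ∉ t := fun hvt => hdisj v hvt v (List.mem_cons_of_mem m hv) rfl
    rw [hsl, List.idxOf_append_of_mem (List.mem_append_right _ (hpd.mem_iff.2 hv)),
      List.idxOf_append_of_notMem (fun h => hvt (hpt.mem_iff.1 h)), hpt.length_eq]
  have idx_d_lt : ∀ v ∈ d, (stackSort l).idxOf v < j + d.length := fun v hv => by
    rw [idx_d v hv]
    have := List.idxOf_lt_length_iff.2 (hpd.mem_iff.2 hv)
    rw [hpd.length_eq] at this
    omega
  have idx_m : (stackSort l).idxOf m = j + d.length := by
    rw [hsl, List.idxOf_append_of_notMem, List.length_append, hpt.length_eq,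
      hpd.length_eq]
    · simp [hj]
    · intro h
      rcases List.mem_append.1 h with h | h
      · exact hmt (hpt.mem_iff.1 h)
      · exact hmd (hpd.mem_iff.1 h)
  -- main case analysis
  rcases lt_trichotomy b j with hbj | hbj | hbj
  · -- b inside t
    have hIH := ih _ hlt t rfl hnt a b hab (by omega)
    constructor
    · intro h i h1 h2
      rw [e1 i (by omega), e1 b hbj, idx_t _ (mem't i (by omega)), idx_t _ (mem't b hbj)]
      refine hIH.mp ?_ i h1 h2
      intro i' h1' h2'
      have := h i' h1' h2'
      rwa [e1 i' (by omega), e1 b hbj] at this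
    · intro h i h1 h2
      rw [e1 i (by omega), e1 b hbj]
      refine hIH.mpr ?_ i h1 h2
      intro i' h1' h2'
      have := h i' h1' h2'
      rwa [e1 i' (by omega), e1 b hbj, idx_t _ (mem't i' (by omega)),
        idx_t _ (mem't b hbj)] at this
  · -- b is the position of the maximum: both sides hold
    subst hbj
    constructor
    · intro _ i h1 h2
      rw [e2, idx_m, e1 i h2, idx_t _ (mem't i h2)]
      have := idx_t_lt _ (mem't i h2)
      rw [idx_t _ (mem't i h2)] at this
      omega
    · intro _ i h1 h2
      rw [e2, e1 i h2]
      have hmem : t.getD i 0 ∈ l := by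
        rw [hsplit]; exact List.mem_append_left _ (mem't i h2)
      refine lt_of_le_of_ne (hle _ hmem) ?_
      intro h
      exact hmt (h ▸ mem't i h2)
  · -- b inside d
    have hbd : b - j - 1 < d.length := by omega
    rcases le_or_gt a j with haj | haj
    · -- the interval contains the max: both sides fail
      have hbm : l.getD b 0 < m := by
        rw [e3 b hbj]
        have hmem : d.getD (b - j - 1) 0 ∈ l := by
          rw [hsplit]
          exact List.mem_append_right _ (List.mem_cons_of_mem m (mem'd _ hbd))
        refine lt_of_le_of_ne (hle _ hmem) ?_
        intro h
        exact hmd (h ▸ mem'd _ hbd)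
      refine iff_of_false ?_ ?_
      · intro h
        have := h j haj hbj
        rw [e2] at this
        omega
      · intro h
        have := h j haj hbj
        rw [e2, idx_m] at this
        have h2 := idx_d_lt (l.getD b 0) (by rw [e3 b hbj]; exact mem'd _ hbd)
        omega
    · -- interval entirely inside d
      have hIH := ih _ hld d rfl hnd (a - j - 1) (b - j - 1) (by omega) hbd
      constructor
      · intro h i h1 h2
        have inner : ∀ i', a - j - 1 ≤ i' → i' < b - j - 1 →
            d.getD i' 0 < d.getD (b - j - 1) 0 := by
          intro i' h1' h2'
          have := h (i' + j + 1) (by omega) (by omega)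
          rw [e3 _ (by omega), e3 b (by omega)] at this
          have hx : i' + j + 1 - j - 1 = i' := by omega
          rwa [hx] at this
        have key := hIH.mp inner (i - j - 1) (by omega) (by omega)
        rw [e3 i (by omega), e3 b (by omega), idx_d _ (mem'd _ (by omega)),
          idx_d _ (mem'd _ hbd)]
        exact Nat.add_lt_add_left key j
      · intro h i h1 h2
        have inner : ∀ i', a - j - 1 ≤ i' → i' < b - j - 1 →
            (stackSort d).idxOf (d.getD i' 0) < (stackSort d).idxOf (d.getD (b - j - 1) 0) := by
          intro i' h1' h2'
          have := h (i' + j + 1) (by omega) (by omega)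
          rw [e3 _ (by omega), e3 b (by omega)] at this
          have hx : i' + j + 1 - j - 1 = i' := by omega
          rw [hx] at this
          rw [idx_d _ (mem'd _ (by omega)), idx_d _ (mem'd _ hbd)] at this
          exact Nat.lt_of_add_lt_add_left this
        have key := hIH.mpr inner (i - j - 1) (by omega) (by omega)
        rw [e3 i (by omega), e3 b (by omega)]
        exact key


lemma idxOf_map_inj (f : ℕ → ℕ) : ∀ (l : List ℕ),
    (∀ x ∈ l, ∀ y ∈ l, f x = f y → x = y) → ∀ v ∈ l,
    (l.map f).idxOf (f v) = l.idxOf v := by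
  intro l
  induction l with
  | nil => intro _ v hv; simp at hv
  | cons a l ihl =>
    intro hinj v hv
    rcases eq_or_ne a v with rfl | hav
    · simp
    · have hfa : f a ≠ f v := fun h => hav (hinj a (by simp) v hv h)
      have hv' : v ∈ l := by
        rcases List.mem_cons.1 hv with h | h
        · exact absurd h.symm hav
        · exact h
      rw [List.map_cons, List.idxOf_cons_ne _ (by simpa using hfa),
        List.idxOf_cons_ne _ (by simpa using hav),
        ihl (fun x hx y hy => hinj x (List.mem_cons_of_mem a hx) y (List.mem_cons_of_mem a hy))
          v hv']

lemma isPermList_facts {n : ℕ} {π : List ℕ} (hπ : IsPermList n π) :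
    π.length = n ∧ π.Nodup ∧ (∀ x ∈ π, 1 ≤ x ∧ x < 1 + n) := by
  refine ⟨by simpa using hπ.length_eq, ?_, ?_⟩
  · exact hπ.nodup_iff.mpr (List.nodup_range')
  · intro x hx
    exact List.mem_range'_1.mp (hπ.mem_iff.mp hx) |>.imp id (by omega)

lemma skel_idxOf {n : ℕ} {π : List ℕ} (hπ : IsPermList n π) (i : ℕ) (hi : i < n) :
    (skel π).idxOf (i + 1) = (stackSort π).idxOf (π.getD i 0) := by
  obtain ⟨hlen, hnd, hmem⟩ := isPermList_facts hπ
  have hsp := stackSort_perm π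
  set g : ℕ → ℕ := fun k => π.idxOf k + 1 with hg
  have hmap : skel π = (stackSort π).map g := by
    unfold skel compw
    refine List.map_congr_left ?_
    intro k hk
    have hkπ : k ∈ π := hsp.mem_iff.mp hk
    obtain ⟨hk1, hk2⟩ := hmem k hkπ
    unfold invw
    rw [List.getD_eq_getElem _ _ (by simp [hlen]; omega), List.getElem_map,
      List.getElem_range']
    simp only [hg]
    have hk4 : 1 + 1 * (k - 1) = k := by omega
    rw [hk4]
  have hv : π.getD i 0 ∈ π := getD_mem' π i (by omega)
  have hvi : g (π.getD i 0) = i + 1 := by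
    simp only [hg]
    rw [List.getD_eq_getElem π 0 (by omega), List.Nodup.idxOf_getElem hnd]
  have hinj : ∀ x ∈ stackSort π, ∀ y ∈ stackSort π, g x = g y → x = y := by
    intro x hx y hy hxy
    have hx' : x ∈ π := hsp.mem_iff.mp hx
    have hy' : y ∈ π := hsp.mem_iff.mp hy
    have hxy' : π.idxOf x = π.idxOf y := by
      simp only [hg] at hxy; omega
    exact (List.idxOf_inj hx').mp hxy'
  have key := idxOf_map_inj g (stackSort π) hinj _ (hsp.mem_iff.mpr hv)
  rw [hvi] at key
  rw [hmap]
  exact key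

/-- Transfer of the dominance condition along equality of skeletons. -/
lemma dom_transfer {n : ℕ} {π π' : List ℕ} (hπ : IsPermList n π) (hπ' : IsPermList n π')
    (hsk : skel π = skel π') {a b : ℕ} (hab : a ≤ b) (hb : b < n)
    (h : ∀ i, a ≤ i → i < b → π.getD i 0 < π.getD b 0) :
    ∀ i, a ≤ i → i < b → π'.getD i 0 < π'.getD b 0 := by
  obtain ⟨hlen, hnd, _⟩ := isPermList_facts hπ
  obtain ⟨hlen', hnd', _⟩ := isPermList_facts hπ'
  have h1 := (domEnd_iff_ord π.length π rfl hnd a b hab (by omega)).mp h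
  refine (domEnd_iff_ord π'.length π' rfl hnd' a b hab (by omega)).mpr ?_
  intro i h1' h2'
  have := h1 i h1' h2'
  rw [← skel_idxOf hπ i (by omega), ← skel_idxOf hπ b (by omega), hsk,
    skel_idxOf hπ' i (by omega), skel_idxOf hπ' b (by omega)] at this
  exact this


lemma getD_take' (l : List ℕ) (n i : ℕ) (hi : i < n) (hn : n ≤ l.length) :
    (l.take n).getD i 0 = l.getD i 0 := by
  have h1 : i < (l.take n).length := by simp; omega
  rw [List.getD_eq_getElem _ _ h1, List.getD_eq_getElem _ _ (by omega), List.getElem_take]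

lemma getD_drop' (l : List ℕ) (n i : ℕ) (hi : n + i < l.length) :
    (l.drop n).getD i 0 = l.getD (n + i) 0 := by
  have h1 : i < (l.drop n).length := by simp; omega
  rw [List.getD_eq_getElem _ _ h1, List.getD_eq_getElem _ _ hi, List.getElem_drop]

lemma takeWhile_dropWhile_split (p : ℕ → Bool) :
    ∀ (xs : List ℕ) (y : ℕ) (ys : List ℕ), (∀ x ∈ xs, p x = true) → p y = false →
    (xs ++ y :: ys).takeWhile p = xs ∧ (xs ++ y :: ys).dropWhile p = y :: ys := by
  intro xs
  induction xs with
  | nil => intro y ys _ hy; simp [List.takeWhile_cons, List.dropWhile_cons, hy]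
  | cons a xs ihx =>
    intro y ys hx hy
    have ha : p a = true := hx a (by simp)
    have := ihx y ys (fun x h => hx x (List.mem_cons_of_mem a h)) hy
    simp [List.takeWhile_cons, List.dropWhile_cons, ha, this.1, this.2]

/-- The relabeling map sends stack-sorting preimages of `stackSort σ` to preimages of `π'`,
provided the dominance conditions transfer. -/
lemma relabel_stackSort :
    ∀ n (σ : List ℕ), σ.length = n → σ.Nodup → ∀ (π' : List ℕ), π'.Nodup →
    π'.length = σ.length →
    (∀ a b, a ≤ b → b < σ.length →
      (∀ i, a ≤ i → i < b → (stackSort σ).getD i 0 < (stackSort σ).getD b 0) →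
      (∀ i, a ≤ i → i < b → π'.getD i 0 < π'.getD b 0)) →
    stackSort (σ.map (fun v => π'.getD ((stackSort σ).idxOf v) 0)) = π' := by
  intro n
  induction n using Nat.strong_induction_on with
  | _ n ih =>
  intro σ hn hσ π' hπ' hlen H
  rcases eq_or_ne σ [] with rfl | hne
  · have : π' = [] := List.length_eq_zero_iff.mp (by simpa using hlen)
    subst this
    simp [stackSort]
  obtain ⟨L, R, M, hM, hL, hR, hsplit, hML, hle⟩ := maxSplit σ hne
  have hlt : L.length < n := by
    subst hL hM hn
    exact length_takeWhile_lt _ _ _ (max_getD_mem σ hne) (by simp)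
  have hld : R.length < n := by
    subst hR hM hn
    exact length_dropWhile_tail_lt _ _ hne
  set j := L.length with hj
  set π := stackSort σ with hπdef
  set f : ℕ → ℕ := fun v => π'.getD (π.idxOf v) 0 with hf
  have hsl : π = (stackSort L ++ stackSort R) ++ [M] := by
    rw [hπdef, stackSort_ne_nil σ hne, ← hM, ← hL, ← hR]
  have hpL := stackSort_perm L
  have hpR := stackSort_perm R
  have hσ' := hσ
  rw [hsplit, List.nodup_append, List.nodup_cons] at hσ'
  obtain ⟨hnL, ⟨hMR, hnR⟩, hdisj⟩ := hσ'
  have hlenσ : σ.length = j + R.length + 1 := by rw [hsplit]; simp [hj]; omega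
  have hlenπ : π.length = σ.length := (stackSort_perm σ).length_eq
  have hlenL' : (stackSort L).length = j := hpL.length_eq
  have hlenR' : (stackSort R).length = R.length := hpR.length_eq
  have hlenLR : (stackSort L ++ stackSort R).length = j + R.length := by
    rw [List.length_append, hlenL', hlenR']
  -- the position of M in π is the last one
  have hMsl : M ∉ stackSort L ++ stackSort R := by
    intro h
    rcases List.mem_append.1 h with h | h
    · exact hML (hpL.mem_iff.1 h)
    · exact hMR (hpR.mem_iff.1 h)
  have idx_M : π.idxOf M = j + R.length := by
    rw [hsl, List.idxOf_append_of_notMem hMsl, List.length_append, hpL.length_eq,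
      hpR.length_eq]
    simp [hj]
  have e_last : π.getD (j + R.length) 0 = M := by
    rw [hsl, List.getD_append_right _ _ _ _
      (by rw [List.length_append, hpL.length_eq, hpR.length_eq])]
    rw [List.length_append, hpL.length_eq, hpR.length_eq]
    simp [hj]
  -- entries of π other than the last are smaller than M
  have e_small : ∀ i, i < j + R.length → π.getD i 0 < M := by
    intro i hi
    have h1 : i < (stackSort L ++ stackSort R).length := by
      rw [List.length_append, hpL.length_eq, hpR.length_eq]; omega
    have h2 : π.getD i 0 ∈ stackSort L ++ stackSort R := by
      rw [hsl, List.getD_append _ _ _ _ h1]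
      exact getD_mem' _ _ h1
    have h3 : π.getD i 0 ∈ σ := by
      rw [hsplit]
      rcases List.mem_append.1 h2 with h | h
      · exact List.mem_append_left _ (hpL.mem_iff.1 h)
      · exact List.mem_append_right _ (List.mem_cons_of_mem M (hpR.mem_iff.1 h))
    refine lt_of_le_of_ne (hle _ h3) ?_
    intro h
    exact hMsl (h ▸ h2)
  -- transfer the dominance of the maximum to π'
  set M' := π'.getD (j + R.length) 0 with hM'
  have h' : ∀ i, i < j + R.length → π'.getD i 0 < M' := by
    intro i hi
    refine H 0 (j + R.length) (by omega) (by omega) ?_ i (by omega) hi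
    intro i' _ h2'
    rw [e_last]
    exact e_small i' h2'
  have hfM : f M = M' := by rw [hf]; simp only; rw [idx_M]
  -- index formulas for values in L and R
  have idx_L : ∀ v ∈ L, π.idxOf v = (stackSort L).idxOf v := by
    intro v hv
    rw [hsl, List.idxOf_append_of_mem (List.mem_append_left _ (hpL.mem_iff.2 hv)),
      List.idxOf_append_of_mem (hpL.mem_iff.2 hv)]
  have idx_L_lt : ∀ v ∈ L, π.idxOf v < j := by
    intro v hv
    rw [idx_L v hv]
    have := List.idxOf_lt_length_iff.2 (hpL.mem_iff.2 hv)
    rwa [hpL.length_eq] at this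
  have idx_R : ∀ v ∈ R, π.idxOf v = j + (stackSort R).idxOf v := by
    intro v hv
    have hvL : v ∉ L := fun hvL => hdisj v hvL v (List.mem_cons_of_mem M hv) rfl
    rw [hsl, List.idxOf_append_of_mem (List.mem_append_right _ (hpR.mem_iff.2 hv)),
      List.idxOf_append_of_notMem (fun h => hvL (hpL.mem_iff.1 h)), hpL.length_eq]
  have idx_R_lt : ∀ v ∈ R, π.idxOf v < j + R.length := by
    intro v hv
    rw [idx_R v hv]
    have := List.idxOf_lt_length_iff.2 (hpR.mem_iff.2 hv)
    rw [hpR.length_eq] at this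
    omega
  have f_L_lt : ∀ v ∈ L, f v < M' := fun v hv => h' _ (lt_of_lt_of_le (idx_L_lt v hv) (by omega))
  have f_R_lt : ∀ v ∈ R, f v < M' := fun v hv => h' _ (idx_R_lt v hv)
  -- decomposition of the relabeled word
  have hmap : σ.map f = L.map f ++ M' :: R.map f := by
    rw [hsplit, List.map_append, List.map_cons, hfM]
  -- M' is the maximum of the relabeled word
  have hmax' : (σ.map f).max?.getD 0 = M' := by
    have : (σ.map f).max? = some M' := by
      rw [List.max?_eq_some_iff]
      constructor
      · rw [hmap]
        exact List.mem_append_right _ (List.mem_cons_self)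
      · intro b hb
        rw [hmap] at hb
        rcases List.mem_append.1 hb with hb | hb
        · obtain ⟨v, hv, rfl⟩ := List.mem_map.1 hb
          exact le_of_lt (f_L_lt v hv)
        · rcases List.mem_cons.1 hb with rfl | hb
          · exact le_refl _
          · obtain ⟨v, hv, rfl⟩ := List.mem_map.1 hb
            exact le_of_lt (f_R_lt v hv)
    rw [this]
    rfl
  -- splitting the relabeled word at its maximum
  have hsplit' := takeWhile_dropWhile_split (· ≠ M') (L.map f) M' (R.map f)
    (by
      intro x hx
      obtain ⟨v, hv, rfl⟩ := List.mem_map.1 hx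
      simpa using Nat.ne_of_lt (f_L_lt v hv))
    (by simp)
  have hss' : stackSort (σ.map f) =
      stackSort (L.map f) ++ stackSort (R.map f) ++ [M'] := by
    rw [stackSort_ne_nil (σ.map f) (by rw [hmap]; simp), hmax', hmap, hsplit'.1, hsplit'.2]
    simp
  -- apply the induction hypothesis to L
  have hL_IH : stackSort (L.map f) = π'.take j := by
    have hlen1 : (π'.take j).length = L.length := by
      simp [hlen, hlenσ]
      omega
    have hIH := ih _ hlt L rfl hnL (π'.take j)
      (hπ'.sublist (List.take_sublist _ _)) hlen1 ?_
    · rw [← hIH]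
      refine congrArg _ (List.map_congr_left ?_).symm
      intro v hv
      rw [hf]
      simp only
      rw [idx_L v hv, getD_take' _ _ _ ?_ (by omega)]
      · rw [← idx_L v hv]
        exact idx_L_lt v hv
    · -- dominance transfer for the prefix
      intro a b hab hb hdom i h1 h2
      have hbj : b < j := by rwa [← hj] at hb
      have ed : ∀ i', i' < j → (stackSort L).getD i' 0 = π.getD i' 0 := by
        intro i' hi'
        have hx1 : i' < (stackSort L ++ stackSort R).length := by rw [hlenLR]; omega
        have hx2 : i' < (stackSort L).length := by rw [hlenL']; omega
        rw [hsl, List.getD_append _ _ _ _ hx1, List.getD_append _ _ _ _ hx2]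
      have hdom' : ∀ i', a ≤ i' → i' < b → π.getD i' 0 < π.getD b 0 := by
        intro i' h1' h2'
        rw [← ed i' (by omega), ← ed b hbj]
        exact hdom i' h1' h2'
      have := H a b hab (by omega) hdom' i h1 h2
      rw [getD_take' _ _ _ (by omega) (by omega), getD_take' _ _ _ (by omega) (by omega)]
      exact this
  -- apply the induction hypothesis to R
  have hR_IH : stackSort (R.map f) = (π'.drop j).take R.length := by
    have hlen2 : ((π'.drop j).take R.length).length = R.length := by
      simp [hlen, hlenσ]
      omega
    have hIH := ih _ hld R rfl hnR ((π'.drop j).take R.length)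
      ((hπ'.sublist (List.drop_sublist _ _)).sublist (List.take_sublist _ _)) hlen2 ?_
    · rw [← hIH]
      refine congrArg _ (List.map_congr_left ?_).symm
      intro v hv
      rw [hf]
      simp only
      have hidx := List.idxOf_lt_length_iff.2 (hpR.mem_iff.2 hv)
      rw [hpR.length_eq] at hidx
      rw [idx_R v hv, getD_take' _ _ _ hidx (by simp [hlen, hlenσ]; omega),
        getD_drop' _ _ _ (by omega)]
    · -- dominance transfer for the middle segment
      intro a b hab hb hdom i h1 h2
      have hbR : b < R.length := hb
      have ed : ∀ i', i' < R.length → (stackSort R).getD i' 0 = π.getD (j + i') 0 := by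
        intro i' hi'
        have hx1 : j + i' < (stackSort L ++ stackSort R).length := by rw [hlenLR]; omega
        have hx2 : (stackSort L).length ≤ j + i' := by rw [hlenL']; omega
        rw [hsl, List.getD_append _ _ _ _ hx1, List.getD_append_right _ _ _ _ hx2, hlenL']
        congr 1
        omega
      have hdom' : ∀ i', j + a ≤ i' → i' < j + b → π.getD i' 0 < π.getD (j + b) 0 := by
        intro i' h1' h2'
        have hx : i' = j + (i' - j) := by omega
        rw [hx, ← ed (i' - j) (by omega), ← ed b hbR]
        exact hdom (i' - j) (by omega) (by omega)
      have := H (j + a) (j + b) (by omega) (by omega) hdom' (j + i) (by omega) (by omega)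
      rw [getD_take' _ _ _ (by omega) (by simp [hlen, hlenσ]; omega),
        getD_take' _ _ _ (by omega) (by simp [hlen, hlenσ]; omega),
        getD_drop' _ _ _ (by omega), getD_drop' _ _ _ (by omega)]
      exact this
  -- assemble
  have hdrop_last : π'.drop (j + R.length) = [M'] := by
    have hlen3 : (π'.drop (j + R.length)).length = 1 := by
      simp [hlen, hlenσ]
    obtain ⟨x, hx⟩ := List.length_eq_one_iff.mp hlen3
    have : (π'.drop (j + R.length)).getD 0 0 = M' := by
      rw [getD_drop' _ _ _ (by omega), Nat.add_zero]
    rw [hx] at this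
    simp at this
    rw [hx, this]
  rw [hss', hL_IH, hR_IH, List.append_assoc]
  have hdd : [M'] = (π'.drop j).drop R.length := by
    rw [List.drop_drop]
    exact hdrop_last.symm
  rw [hdd, List.take_append_drop, List.take_append_drop]


/-- The relabeling map sends `s`-preimages of `π` to `s`-preimages of `π'`. -/
lemma relabel_preimage {n : ℕ} {π π' : List ℕ} (hπ : IsPermList n π) (hπ' : IsPermList n π')
    (hsk : skel π = skel π') (σ : List ℕ) (hσ : IsPermList n σ) (hs : stackSort σ = π) :
    IsPermList n (σ.map (fun v => π'.getD (π.idxOf v) 0)) ∧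
    stackSort (σ.map (fun v => π'.getD (π.idxOf v) 0)) = π' := by
  obtain ⟨hlenπ, hndπ, hmemπ⟩ := isPermList_facts hπ
  obtain ⟨hlenπ', hndπ', hmemπ'⟩ := isPermList_facts hπ'
  obtain ⟨hlenσ, hndσ, hmemσ⟩ := isPermList_facts hσ
  have hstack : stackSort (σ.map (fun v => π'.getD (π.idxOf v) 0)) = π' := by
    have := relabel_stackSort σ.length σ rfl hndσ π' hndπ' (by omega) ?_
    · rwa [hs] at this
    · intro a b hab hb hdom
      rw [hs] at hdom
      exact dom_transfer hπ hπ' hsk hab (by omega) hdom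
  refine ⟨?_, hstack⟩
  have hπmap : π.map (fun v => π'.getD (π.idxOf v) 0) = π' := by
    refine List.ext_getElem (by simp [hlenπ, hlenπ']) ?_
    intro i h1 h2
    rw [List.getElem_map, List.Nodup.idxOf_getElem hndπ, List.getD_eq_getElem π' 0 (by omega)]
  have hperm : σ.Perm π := hσ.trans hπ.symm
  have hmp := hperm.map (fun v => π'.getD (π.idxOf v) 0)
  rw [hπmap] at hmp
  exact hmp.trans hπ'

lemma relabel_roundtrip {n : ℕ} {π π' : List ℕ} (hπ : IsPermList n π) (hπ' : IsPermList n π')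
    (v : ℕ) (hv : v ∈ π) :
    π.getD (π'.idxOf (π'.getD (π.idxOf v) 0)) 0 = v := by
  obtain ⟨hlenπ, hndπ, _⟩ := isPermList_facts hπ
  obtain ⟨hlenπ', hndπ', _⟩ := isPermList_facts hπ'
  have hk : π.idxOf v < n := by
    have := List.idxOf_lt_length_iff.2 hv
    omega
  rw [List.getD_eq_getElem π' 0 (by omega), List.Nodup.idxOf_getElem hndπ',
    List.getD_eq_getElem π 0 (by omega), List.getElem_idxOf]

/-- The fertility `|s⁻¹(π)|` is a skeletal statistic: permutations with the same skeleton
have the same fertility. -/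
theorem fertility_skeletal (n : ℕ) (π π' : List ℕ) (hπ : IsPermList n π)
    (hπ' : IsPermList n π') (hsk : skel π = skel π') :
    Nat.card {σ : List ℕ // IsPermList n σ ∧ stackSort σ = π} =
      Nat.card {σ : List ℕ // IsPermList n σ ∧ stackSort σ = π'} := by
  obtain ⟨hlenπ, hndπ, _⟩ := isPermList_facts hπ
  obtain ⟨hlenπ', hndπ', _⟩ := isPermList_facts hπ'
  refine Nat.card_congr ?_
  refine
    { toFun := fun x => ⟨x.1.map (fun v => π'.getD (π.idxOf v) 0),
        relabel_preimage hπ hπ' hsk x.1 x.2.1 x.2.2⟩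
      invFun := fun y => ⟨y.1.map (fun v => π.getD (π'.idxOf v) 0),
        relabel_preimage hπ' hπ hsk.symm y.1 y.2.1 y.2.2⟩
      left_inv := ?_
      right_inv := ?_ }
  · rintro ⟨σ, hσ1, hσ2⟩
    apply Subtype.ext
    simp only [List.map_map]
    refine (List.map_congr_left ?_).trans (List.map_id σ)
    intro v hv
    have hvπ : v ∈ π := (hσ1.trans hπ.symm).mem_iff.mp hv
    simpa using relabel_roundtrip hπ hπ' v hvπ
  · rintro ⟨σ, hσ1, hσ2⟩
    apply Subtype.ext
    simp only [List.map_map]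
    refine (List.map_congr_left ?_).trans (List.map_id σ)
    intro v hv
    have hvπ : v ∈ π' := (hσ1.trans hπ'.symm).mem_iff.mp hv
    simpa using relabel_roundtrip hπ' hπ v hvπ
end

section
/- If π, π' ∈ S_n satisfy π' = swap_i(π) and some entry larger than i+1 lies between i and i+1 in π, then swap_i maps the postorder-preimage set 𝒫⁻¹(π) bijectively onto 𝒫⁻¹(π'), and this bijection preserves the skeleton (the underlying unlabeled rooted plane tree) of each decreasing plane tree. -/
/-- Rooted plane trees with vertices labeled by natural numbers. -/
inductive PTree where
  | node : ℕ → List PTree → PTree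

/-- Unlabeled rooted plane trees (the skeletons of labeled plane trees). -/
inductive PShape where
  | node : List PShape → PShape

def PTree.rootLabel : PTree → ℕ
  | .node a _ => a

/-- The postorder reading of a labeled plane tree. -/
def PTree.postorder : PTree → List ℕ
  | .node a ts => (ts.attach.map fun t => t.1.postorder).flatten ++ [a]
termination_by t => sizeOf t
decreasing_by
  have := List.sizeOf_lt_of_mem t.2
  simp only [PTree.node.sizeOf_spec]
  omega

/-- The skeleton (underlying unlabeled rooted plane tree) of a labeled plane tree. -/
def PTree.shape : PTree → PShape
  | .node _ ts => .node (ts.attach.map fun t => t.1.shape)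
termination_by t => sizeOf t
decreasing_by
  have := List.sizeOf_lt_of_mem t.2
  simp only [PTree.node.sizeOf_spec]
  omega

/-- Relabel every vertex of a plane tree by `f`. -/
def PTree.relabel (f : ℕ → ℕ) : PTree → PTree
  | .node a ts => .node (f a) (ts.attach.map fun t => t.1.relabel f)
termination_by t => sizeOf t
decreasing_by
  have := List.sizeOf_lt_of_mem t.2
  simp only [PTree.node.sizeOf_spec]
  omega

/-- A decreasing plane tree: every nonroot label is smaller than its parent's label. -/
inductive PTree.Decreasing : PTree → Prop
  | node (a : ℕ) (ts : List PTree) :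
      (∀ t ∈ ts, t.rootLabel < a) → (∀ t ∈ ts, t.Decreasing) → PTree.Decreasing (.node a ts)

/-- A decreasing plane tree on `{1, …, n}`. -/
def IsDPT (n : ℕ) (T : PTree) : Prop :=
  T.Decreasing ∧ T.postorder.Perm (List.range' 1 n)

/-- Exchange the labels `i` and `i+1` in a labeled plane tree. -/
def swapLabels (i : ℕ) (T : PTree) : PTree :=
  T.relabel fun x => if x = i then i + 1 else if x = i + 1 then i else x

section Aux

/-- The function swapping `i` and `i+1`. -/
def swapFun (i : ℕ) (x : ℕ) : ℕ := if x = i then i + 1 else if x = i + 1 then i else x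

lemma swapFun_invol (i x : ℕ) : swapFun i (swapFun i x) = x := by
  unfold swapFun; split_ifs <;> omega

lemma swapFun_inj (i : ℕ) : Function.Injective (swapFun i) :=
  Function.Involutive.injective (swapFun_invol i)

lemma swapEntries_eq_map (i : ℕ) (l : List ℕ) : swapEntries i l = l.map (swapFun i) := rfl

lemma swapLabels_eq_relabel (i : ℕ) (T : PTree) : swapLabels i T = T.relabel (swapFun i) := rfl

/-- Custom induction principle for `PTree`. -/
theorem PTree.ind' {motive : PTree → Prop}
    (h : ∀ a ts, (∀ t ∈ ts, motive t) → motive (.node a ts)) : ∀ T, motive T := by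
  have key : ∀ k T, sizeOf T ≤ k → motive T := by
    intro k
    induction k with
    | zero => rintro ⟨a, ts⟩ hs; simp [PTree.node.sizeOf_spec] at hs
    | succ k ih =>
      rintro ⟨a, ts⟩ hs
      refine h a ts fun t ht => ih t ?_
      have := List.sizeOf_lt_of_mem ht
      simp only [PTree.node.sizeOf_spec] at hs
      omega
  exact fun T => key (sizeOf T) T le_rfl

theorem PTree.postorder_node (a : ℕ) (ts : List PTree) :
    PTree.postorder (.node a ts) = (ts.map PTree.postorder).flatten ++ [a] := by
  rw [PTree.postorder]; simp [List.map_attach_eq_pmap]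

theorem PTree.shape_node (a : ℕ) (ts : List PTree) :
    PTree.shape (.node a ts) = .node (ts.map PTree.shape) := by
  rw [PTree.shape]; simp [List.map_attach_eq_pmap]

theorem PTree.relabel_node (f : ℕ → ℕ) (a : ℕ) (ts : List PTree) :
    PTree.relabel f (.node a ts) = .node (f a) (ts.map (PTree.relabel f)) := by
  rw [PTree.relabel]; simp [List.map_attach_eq_pmap]

theorem PTree.rootLabel_relabel (f : ℕ → ℕ) (T : PTree) :
    (T.relabel f).rootLabel = f T.rootLabel := by
  cases T with
  | node a ts => rw [PTree.relabel_node]; rfl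

theorem PTree.postorder_relabel (f : ℕ → ℕ) (T : PTree) :
    (T.relabel f).postorder = T.postorder.map f := by
  induction T using PTree.ind' with
  | h a ts ih =>
    rw [PTree.relabel_node, PTree.postorder_node, PTree.postorder_node, List.map_append,
      List.map_flatten, List.map_map, List.map_map]
    congr 2
    exact List.map_congr_left fun t ht => ih t ht

theorem PTree.shape_relabel (f : ℕ → ℕ) (T : PTree) :
    (T.relabel f).shape = T.shape := by
  induction T using PTree.ind' with
  | h a ts ih =>
    rw [PTree.relabel_node, PTree.shape_node, PTree.shape_node, List.map_map]
    congr 1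
    exact List.map_congr_left fun t ht => ih t ht

theorem PTree.relabel_invol {f : ℕ → ℕ} (hf : ∀ x, f (f x) = x) (T : PTree) :
    (T.relabel f).relabel f = T := by
  induction T using PTree.ind' with
  | h a ts ih =>
    rw [PTree.relabel_node, PTree.relabel_node, List.map_map]
    congr 1
    · exact hf a
    · calc ts.map (PTree.relabel f ∘ PTree.relabel f)
          = ts.map id := List.map_congr_left fun t ht => ih t ht
        _ = ts := List.map_id ts

theorem PTree.mem_postorder_le_root {T : PTree} (hd : T.Decreasing) :
    ∀ x ∈ T.postorder, x ≤ T.rootLabel := by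
  induction T using PTree.ind' with
  | h a ts ih =>
    cases hd with
    | node _ _ hroot hdec =>
      intro x hx
      rw [PTree.postorder_node] at hx
      rcases List.mem_append.1 hx with hx | hx
      · rcases List.mem_flatten.1 hx with ⟨l, hl, hxl⟩
        rcases List.mem_map.1 hl with ⟨t, ht, rfl⟩
        have h1 := ih t ht (hdec t ht) x hxl
        have h2 := hroot t ht
        exact le_of_lt (lt_of_le_of_lt h1 h2)
      · simp only [List.mem_singleton] at hx
        exact hx.le

theorem PTree.root_mem_postorder (T : PTree) : T.rootLabel ∈ T.postorder := by
  cases T with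
  | node a ts => rw [PTree.postorder_node]; simp [PTree.rootLabel]

/-- `i+1` has a child labeled `i` somewhere in `T`. -/
inductive HasBad (i : ℕ) : PTree → Prop
  | here (ts : List PTree) (h : ∃ t ∈ ts, t.rootLabel = i) : HasBad i (.node (i + 1) ts)
  | there (a : ℕ) (ts : List PTree) (t : PTree) (ht : t ∈ ts) (h : HasBad i t) :
      HasBad i (.node a ts)

theorem decreasing_swap_of_not_hasBad (i : ℕ) (T : PTree) (hd : T.Decreasing)
    (hb : ¬ HasBad i T) : (T.relabel (swapFun i)).Decreasing := by
  induction T using PTree.ind' with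
  | h a ts ih =>
    cases hd with
    | node _ _ hroot hdec =>
      rw [PTree.relabel_node]
      refine PTree.Decreasing.node _ _ ?_ ?_
      · intro t' ht'
        rcases List.mem_map.1 ht' with ⟨t, ht, rfl⟩
        rw [PTree.rootLabel_relabel]
        have hc := hroot t ht
        have hne : ¬(a = i + 1 ∧ t.rootLabel = i) := by
          rintro ⟨h1, h2⟩
          exact hb (h1 ▸ HasBad.here ts ⟨t, ht, h2⟩)
        unfold swapFun
        split_ifs <;> omega
      · intro t' ht'
        rcases List.mem_map.1 ht' with ⟨t, ht, rfl⟩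
        exact ih t ht (hdec t ht) fun h => hb (HasBad.there a ts t ht h)

theorem hasBad_decomp {i : ℕ} {T : PTree} (hb : HasBad i T) :
    T.Decreasing → ∃ A Q B : List ℕ,
      T.postorder = A ++ Q ++ (i + 1) :: B ∧ i ∈ Q ∧ ∀ x ∈ Q, x < i + 1 := by
  induction hb with
  | here ts hex =>
    intro hd
    cases hd with
    | node _ _ hroot hdec =>
      refine ⟨[], (ts.map PTree.postorder).flatten, [], ?_, ?_, ?_⟩
      · rw [PTree.postorder_node]; simp
      · rcases hex with ⟨t, ht, hroott⟩
        exact List.mem_flatten.2 ⟨t.postorder, List.mem_map.2 ⟨t, ht, rfl⟩,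
          hroott ▸ t.root_mem_postorder⟩
      · intro x hx
        rcases List.mem_flatten.1 hx with ⟨l, hl, hxl⟩
        rcases List.mem_map.1 hl with ⟨t, ht, rfl⟩
        have h1 := PTree.mem_postorder_le_root (hdec t ht) x hxl
        have h2 := hroot t ht
        omega
  | there a ts t ht h ih =>
    intro hd
    cases hd with
    | node _ _ hroot hdec =>
      rcases ih (hdec t ht) with ⟨A, Q, B, heq, hiQ, hQ⟩
      rcases List.append_of_mem ht with ⟨L1, L2, rfl⟩
      refine ⟨(L1.map PTree.postorder).flatten ++ A, Q,
        B ++ (L2.map PTree.postorder).flatten ++ [a], ?_, hiQ, hQ⟩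
      rw [PTree.postorder_node]
      simp [heq, List.append_assoc]

theorem not_toggleApplies_of_decomp {i : ℕ} {π A Q B : List ℕ}
    (hnd : π.Nodup) (heq : π = A ++ Q ++ (i + 1) :: B) (hiQ : i ∈ Q)
    (hQ : ∀ x ∈ Q, x < i + 1) : ¬ ToggleApplies i π := by
  subst heq
  rw [List.append_assoc] at hnd
  have hdisA := List.disjoint_of_nodup_append hnd
  have hndrest := (List.nodup_append.1 hnd).2.1
  have hdisQ := List.disjoint_of_nodup_append hndrest
  have hiA : i ∉ A := fun hA => hdisA hA (List.mem_append_left _ hiQ)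
  have hi1AQ : i + 1 ∉ A ++ Q := by
    rw [← List.append_assoc] at hnd
    intro hmem
    exact List.disjoint_of_nodup_append hnd hmem List.mem_cons_self
  have hidx1 : (A ++ Q ++ (i + 1) :: B).idxOf (i + 1) = A.length + Q.length := by
    rw [List.idxOf_append_of_notMem hi1AQ, List.idxOf_cons_eq _ rfl, List.length_append]
    omega
  have hidxi : (A ++ Q ++ (i + 1) :: B).idxOf i = A.length + Q.idxOf i := by
    rw [List.append_assoc, List.idxOf_append_of_notMem hiA,
      List.idxOf_append_of_mem hiQ]
  have hiQlt : Q.idxOf i < Q.length := List.idxOf_lt_length_iff.2 hiQ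
  rintro ⟨a, ha, hgt, h1, h2⟩
  have hlt : (A ++ Q ++ (i + 1) :: B).idxOf i < (A ++ Q ++ (i + 1) :: B).idxOf (i + 1) := by
    rw [hidx1, hidxi]; omega
  have h1' : (A ++ Q ++ (i + 1) :: B).idxOf i < (A ++ Q ++ (i + 1) :: B).idxOf a := by omega
  have h2' : (A ++ Q ++ (i + 1) :: B).idxOf a < A.length + Q.length := by omega
  clear h1 h2
  -- a lies in A ++ Q
  have haAQ : a ∈ A ++ Q := by
    by_contra hmem
    have : (A ++ Q ++ (i + 1) :: B).idxOf a
        = (A ++ Q).length + ((i + 1) :: B).idxOf a := by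
      rw [List.idxOf_append_of_notMem hmem]
    rw [this, List.length_append] at h2'
    omega
  rcases List.mem_append.1 haAQ with haA | haQ
  · have : (A ++ Q ++ (i + 1) :: B).idxOf a = A.idxOf a := by
      rw [List.append_assoc, List.idxOf_append_of_mem haA]
    have hAlen : A.idxOf a < A.length := List.idxOf_lt_length_iff.2 haA
    rw [this, hidxi] at h1'
    omega
  · have := hQ a haQ
    omega

theorem indexOf_map_of_injective {α β : Type*} [DecidableEq α] [DecidableEq β]
    {f : α → β} (hf : Function.Injective f) (a : α) (l : List α) :
    (l.map f).idxOf (f a) = l.idxOf a := by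
  induction l with
  | nil => rfl
  | cons b t ih =>
    by_cases h : b = a
    · subst h
      rw [List.map_cons, List.idxOf_cons_eq _ rfl, List.idxOf_cons_eq _ rfl]
    · rw [List.map_cons, List.idxOf_cons_ne _ fun hc => h (hf hc),
        List.idxOf_cons_ne _ h, ih]

theorem toggleApplies_swapEntries {i : ℕ} {π : List ℕ} (h : ToggleApplies i π) :
    ToggleApplies i (swapEntries i π) := by
  rcases h with ⟨a, ha, hgt, h1, h2⟩
  have hfa : swapFun i a = a := by unfold swapFun; split_ifs <;> omega
  have hfi : swapFun i i = i + 1 := by unfold swapFun; split_ifs <;> omega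
  have hfi1 : swapFun i (i + 1) = i := by unfold swapFun; split_ifs <;> omega
  rw [swapEntries_eq_map]
  have key : ∀ b, (π.map (swapFun i)).idxOf (swapFun i b) = π.idxOf b :=
    fun b => indexOf_map_of_injective (swapFun_inj i) b π
  have e1 := key (i + 1); rw [hfi1] at e1
  have e2 := key i; rw [hfi] at e2
  have e3 := key a; rw [hfa] at e3
  refine ⟨a, List.mem_map.2 ⟨a, ha, hfa⟩, hgt, ?_, ?_⟩
  · rw [e1, e2, e3]; omega
  · rw [e1, e2, e3]; omega

theorem swapEntries_invol (i : ℕ) (l : List ℕ) : swapEntries i (swapEntries i l) = l := by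
  rw [swapEntries_eq_map, swapEntries_eq_map, List.map_map]
  calc l.map (swapFun i ∘ swapFun i) = l.map id :=
        List.map_congr_left fun x _ => swapFun_invol i x
    _ = l := List.map_id l

theorem swapEntries_perm_range' {n i : ℕ} (hi1 : 1 ≤ i) (hin : i + 1 ≤ n) {π : List ℕ}
    (hπ : π.Perm (List.range' 1 n)) : (swapEntries i π).Perm (List.range' 1 n) := by
  rw [swapEntries_eq_map]
  refine (hπ.map (swapFun i)).trans ?_
  have hd1 : List.range' 1 (i - 1) ++ List.range' i (n - (i - 1)) = List.range' 1 n := by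
    have := List.range'_append (s := 1) (m := i - 1) (n := n - (i - 1)) (step := 1)
    simp only [one_mul] at this
    rw [show 1 + (i - 1) = i by omega, show i - 1 + (n - (i - 1)) = n by omega] at this
    exact this
  have hd2 : List.range' i 2 ++ List.range' (i + 2) (n - (i - 1) - 2)
      = List.range' i (n - (i - 1)) := by
    have := List.range'_append (s := i) (m := 2) (n := n - (i - 1) - 2) (step := 1)
    simp only [one_mul] at this
    rw [show i + 1 * 2 = i + 2 by omega, show 2 + (n - (i - 1) - 2) = n - (i - 1) by omega] at this
    exact this
  rw [← hd1, ← hd2]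
  have hmid : List.range' i 2 = [i, i + 1] := rfl
  rw [hmid]
  have e1 : (List.range' 1 (i - 1)).map (swapFun i) = List.range' 1 (i - 1) := by
    rw [List.map_congr_left (g := id), List.map_id]
    intro x hx
    rcases List.mem_range'_1.1 hx with ⟨hx1, hx2⟩
    unfold swapFun; simp only [id_eq]; split_ifs <;> omega
  have e2 : (List.range' (i + 2) (n - (i - 1) - 2)).map (swapFun i)
      = List.range' (i + 2) (n - (i - 1) - 2) := by
    rw [List.map_congr_left (g := id), List.map_id]
    intro x hx
    rcases List.mem_range'_1.1 hx with ⟨hx1, hx2⟩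
    unfold swapFun; simp only [id_eq]; split_ifs <;> omega
  have e3 : ([i, i + 1] : List ℕ).map (swapFun i) = [i + 1, i] := by
    have hfi : swapFun i i = i + 1 := by unfold swapFun; split_ifs <;> omega
    have hfi1 : swapFun i (i + 1) = i := by unfold swapFun; split_ifs <;> omega
    simp [hfi, hfi1]
  rw [List.map_append, List.map_append, e1, e2, e3]
  exact (List.Perm.refl _).append ((List.Perm.swap _ _ _).append (List.Perm.refl _))

theorem mapsTo_aux {n i : ℕ} (hi1 : 1 ≤ i) (hin : i + 1 ≤ n) {π : List ℕ}
    (hπ : π.Perm (List.range' 1 n)) (h : ToggleApplies i π) :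
    Set.MapsTo (swapLabels i) {T : PTree | IsDPT n T ∧ T.postorder = π}
      {T : PTree | IsDPT n T ∧ T.postorder = swapEntries i π} := by
  rintro T ⟨⟨hdec, hperm⟩, hpost⟩
  have hnd : π.Nodup := (hπ.nodup_iff).2 (List.nodup_range' (s := 1) (n := n))
  have hnb : ¬ HasBad i T := by
    intro hb
    rcases hasBad_decomp hb hdec with ⟨A, Q, B, heq, hiQ, hQ⟩
    exact not_toggleApplies_of_decomp hnd (hpost ▸ heq) hiQ hQ h
  have hpost' : (swapLabels i T).postorder = swapEntries i π := by
    rw [swapLabels_eq_relabel, PTree.postorder_relabel, hpost, swapEntries_eq_map]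
  refine ⟨⟨?_, ?_⟩, hpost'⟩
  · rw [swapLabels_eq_relabel]
    exact decreasing_swap_of_not_hasBad i T hdec hnb
  · rw [hpost']
    exact swapEntries_perm_range' hi1 hin hπ

end Aux

/-- If `π' = swapᵢ(π)` and an entry larger than `i+1` lies between `i` and `i+1` in `π`,
then swapping the labels `i` and `i+1` is a bijection from `𝒫⁻¹(π)` onto `𝒫⁻¹(π')`
(postorder preimages among decreasing plane trees on `{1, …, n}`), and this bijection
preserves skeletons. -/
theorem postorder_preimage_bijOn (n i : ℕ) (hi₁ : 1 ≤ i) (hi₂ : i ≤ n - 1)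
    (π π' : List ℕ) (hπ : IsPermList n π) (hπ' : π' = swapEntries i π)
    (h : ToggleApplies i π) :
    Set.BijOn (swapLabels i) {T : PTree | IsDPT n T ∧ T.postorder = π}
        {T : PTree | IsDPT n T ∧ T.postorder = π'} ∧
      ∀ T : PTree, IsDPT n T → T.postorder = π → (swapLabels i T).shape = T.shape := by
  have hin : i + 1 ≤ n := by omega
  have hπ'' : π'.Perm (List.range' 1 n) := hπ' ▸ swapEntries_perm_range' hi₁ hin hπ
  have h' : ToggleApplies i π' := hπ' ▸ toggleApplies_swapEntries h
  have hback : swapEntries i π' = π := by rw [hπ', swapEntries_invol]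
  have h1 := mapsTo_aux hi₁ hin hπ h
  have h2 := mapsTo_aux hi₁ hin hπ'' h'
  rw [← hπ'] at h1
  rw [hback] at h2
  constructor
  · refine Set.InvOn.bijOn ⟨?_, ?_⟩ h1 h2
    · intro T _
      rw [swapLabels_eq_relabel, swapLabels_eq_relabel]
      exact PTree.relabel_invol (swapFun_invol i) T
    · intro T _
      rw [swapLabels_eq_relabel, swapLabels_eq_relabel]
      exact PTree.relabel_invol (swapFun_invol i) T
  · intro T _ _
    rw [swapLabels_eq_relabel]
    exact PTree.shape_relabel (swapFun i) T
end
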